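/- (Lemma 3.2, estimate (3.1): parabolic rescaling for caps, conditional on the inductive hypothesis.) Let p₀ = 13/4, let ε > 0, C_ε > 0, R > 1, and let K be an integer with 1 ≤ K ≤ R. Suppose that for every radius r with 1 ≤ r < R, every ball B' of radius r in ℝ³, and every bounded measurable g on S one has ‖Eg‖_{L^{p₀}(B')} ≤ C_ε r^{ε} ‖g‖_{L^∞(S)}. Then there is an absolute constant C such that for every cap τ and every bounded measurable f on S, ‖Ef_τ‖_{L^{p₀}(B(R))} ≤ C C_ε K^{-2 + 4/p₀} R^{ε} ‖f_τ‖_{L^∞(S)}. -/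

import Mathlib

open MeasureTheory Real
open scoped ENNReal RealInnerProductSpace

noncomputable section

/-- Euclidean `ℝ³`. -/
abbrev E3 := EuclideanSpace ℝ (Fin 3)

/-- The closed unit disk `D(1)` in `ℝ²`, the parameter domain of the compact piece
`S = {(ξ₁,ξ₂,ξ₁ξ₂) : (ξ₁,ξ₂) ∈ D(1)}` of the hyperbolic paraboloid. -/
def D1 : Set (ℝ × ℝ) := Metric.closedBall 0 1

/-- Surface-measure density (Jacobian) of the graph map `(ξ₁,ξ₂) ↦ (ξ₁,ξ₂,ξ₁ξ₂)`. -/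
def surfJ (ξ : ℝ × ℝ) : ℝ := Real.sqrt (1 + ξ.1 ^ 2 + ξ.2 ^ 2)

/-- The surface measure `dσ` of `S`, realized on the parameter disk `D(1)`
(`L^p(S,dσ)` norms of functions on `S` are `L^p(σS)` norms in graph coordinates). -/
def σS : Measure (ℝ × ℝ) :=
  (volume.restrict D1).withDensity fun ξ => ENNReal.ofReal (surfJ ξ)

/-- The extension (adjoint restriction) operator `Ef(x) = ∫_S e^{ix·ξ} f(ξ) dσ(ξ)`
of the hyperbolic paraboloid piece `S`, in graph coordinates. -/
def extOp (f : ℝ × ℝ → ℂ) (x : E3) : ℂ :=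
  ∫ ξ, Complex.exp (Complex.I * ((x 0 * ξ.1 + x 1 * ξ.2 + x 2 * (ξ.1 * ξ.2) : ℝ) : ℂ)) * f ξ ∂σS

/-- Index set: integer pairs `(a,b)` with `|a|,|b| ≤ n`. -/
def sqIdx (n : ℕ) : Finset (ℤ × ℤ) :=
  (Finset.Icc (-(n : ℤ)) n) ×ˢ (Finset.Icc (-(n : ℤ)) n)

/-- The square of the axis-parallel grid of side `1/K` with index `(a,b)`:
the projection `τ̄` to `D(1)` of the cap `τ`. -/
def capSq (K : ℕ) (ab : ℤ × ℤ) : Set (ℝ × ℝ) :=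
  Set.Ico ((ab.1 : ℝ) / K) ((ab.1 + 1 : ℝ) / K) ×ˢ
    Set.Ico ((ab.2 : ℝ) / K) ((ab.2 + 1 : ℝ) / K)

/-- Indices of all grid squares of side `1/K` meeting the unit disk. -/
def capIdx (K : ℕ) : Finset (ℤ × ℤ) := sqIdx (K + 1)

/-- The piece `f_τ = f·χ_τ` of `f` on the cap `τ` with index `ab`. -/
def capPiece (K : ℕ) (ab : ℤ × ℤ) (f : ℝ × ℝ → ℂ) : ℝ × ℝ → ℂ :=
  (capSq K ab).indicator f

/-- Axis-parallel grid strip of width `1/K`: for `d = true` the strip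
`c/K ≤ ξ₁ < (c+1)/K` (parallel to `e₂`); for `d = false` the strip
`c/K ≤ ξ₂ < (c+1)/K` (parallel to `e₁`). -/
def stripSet (K : ℕ) (d : Bool) (c : ℤ) : Set (ℝ × ℝ) :=
  if d then {ξ | (c : ℝ) / K ≤ ξ.1 ∧ ξ.1 < (c + 1 : ℝ) / K}
  else {ξ | (c : ℝ) / K ≤ ξ.2 ∧ ξ.2 < (c + 1 : ℝ) / K}

/-- Indices of the grid strips of width `1/K` meeting the unit disk. -/
def stripIdx (K : ℕ) : Finset ℤ := Finset.Icc (-(K : ℤ) - 1) ((K : ℤ) + 1)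

open Classical in
/-- `Σ_{τ : τ̄ ∩ L ≠ ∅} Eg_τ(x)`, for a decomposition `(g_τ)_τ` into cap pieces. -/
def stripSum (K : ℕ) (g : ℤ × ℤ → ℝ × ℝ → ℂ) (L : Set (ℝ × ℝ)) (x : E3) : ℂ :=
  ∑ ab ∈ (capIdx K).filter (fun ab => (capSq K ab ∩ L).Nonempty), extOp (g ab) x

/-- `x` is an `α`-broad point of `Ef` relative to the decomposition of `f` into the
cap pieces `(g_τ)_τ`:
`max_τ |Eg_τ(x)| + max_L |Σ_{τ : τ̄∩L≠∅} Eg_τ(x)| ≤ α |Ef(x)|`. -/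
def broadPtD (K : ℕ) (α : ℝ) (g : ℤ × ℤ → ℝ × ℝ → ℂ) (f : ℝ × ℝ → ℂ) (x : E3) : Prop :=
  ∀ ab ∈ capIdx K, ∀ d : Bool, ∀ c ∈ stripIdx K,
    ‖extOp (g ab) x‖ + ‖stripSum K g (stripSet K d c) x‖
      ≤ α * ‖extOp f x‖

open Classical in
/-- The `α`-broad function `B_α[Ef]` relative to the cap decomposition `(g_τ)_τ`:
it equals `Ef(x)` at `α`-broad points and `0` elsewhere. -/
def broadFnD (K : ℕ) (α : ℝ) (g : ℤ × ℤ → ℝ × ℝ → ℂ) (f : ℝ × ℝ → ℂ) (x : E3) : ℂ :=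
  if broadPtD K α g f x then extOp f x else 0

/-- The `α`-broad function `B_α[Ef]`, with the standard cap pieces `f_τ = f·χ_τ`. -/
def broadFn (K : ℕ) (α : ℝ) (f : ℝ × ℝ → ℂ) : E3 → ℂ :=
  broadFnD K α (fun ab => capPiece K ab f) f

open scoped NNReal in
section
open scoped NNReal

namespace PR

lemma one_le_surfJ (ξ : ℝ × ℝ) : 1 ≤ surfJ ξ := by
  have h := Real.sqrt_le_sqrt (show (1:ℝ) ≤ 1 + ξ.1 ^ 2 + ξ.2 ^ 2 by nlinarith [sq_nonneg ξ.1, sq_nonneg ξ.2])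
  rw [surfJ]; simpa using h

lemma surfJ_pos (ξ : ℝ × ℝ) : 0 < surfJ ξ := lt_of_lt_of_le one_pos (one_le_surfJ ξ)

lemma mem_D1 {ξ : ℝ × ℝ} (h : ξ ∈ D1) : |ξ.1| ≤ 1 ∧ |ξ.2| ≤ 1 := by
  rw [D1, Metric.mem_closedBall, dist_zero_right, Prod.norm_def] at h
  constructor
  · exact le_trans (le_max_left _ _) h
  · exact le_trans (le_max_right _ _) h

lemma surfJ_le_two {ξ : ℝ × ℝ} (h : ξ ∈ D1) : surfJ ξ ≤ 2 := by
  obtain ⟨h1, h2⟩ := mem_D1 h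
  rw [surfJ, show (2:ℝ) = Real.sqrt 4 by rw [show (4:ℝ) = 2^2 by norm_num, Real.sqrt_sq]; norm_num]
  apply Real.sqrt_le_sqrt
  nlinarith [abs_nonneg ξ.1, abs_nonneg ξ.2, sq_abs ξ.1, sq_abs ξ.2]

lemma measurable_surfJ : Measurable surfJ := by
  apply Measurable.sqrt; fun_prop

instance : IsFiniteMeasure σS := by
  constructor
  rw [σS, withDensity_apply _ MeasurableSet.univ, Measure.restrict_restrict MeasurableSet.univ,
    Set.univ_inter]
  calc ∫⁻ ξ in D1, ENNReal.ofReal (surfJ ξ) ∂volume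
      ≤ ∫⁻ _ in D1, (2:ℝ≥0∞) ∂volume := by
        apply setLIntegral_mono measurable_const
        intro ξ hξ
        exact le_trans (ENNReal.ofReal_le_ofReal (surfJ_le_two hξ)) (by norm_num)
    _ = 2 * volume D1 := by simp [mul_comm]
    _ < ⊤ := by
        exact ENNReal.mul_lt_top ENNReal.ofNat_lt_top Metric.isBounded_closedBall.measure_lt_top

lemma σS_ac : σS ≪ (volume : Measure (ℝ × ℝ)) :=
  (withDensity_absolutelyContinuous _ _).trans
    (Measure.absolutelyContinuous_of_le Measure.restrict_le_self)

lemma restrict_le_σS : volume.restrict D1 ≤ σS := by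
  rw [σS]
  nth_rewrite 1 [← withDensity_one (μ := volume.restrict D1)]
  exact withDensity_mono (ae_of_all _ fun ξ => by
    simpa using ENNReal.one_le_ofReal.2 (one_le_surfJ ξ))

lemma σS_null {s : Set (ℝ × ℝ)} (h : σS s = 0) : volume.restrict D1 s = 0 :=
  le_antisymm (le_trans (restrict_le_σS s) h.le) zero_le

lemma integral_σS (h : ℝ × ℝ → ℂ) :
    ∫ ξ, h ξ ∂σS = ∫ ξ, D1.indicator (fun ξ => (surfJ ξ : ℂ) * h ξ) ξ := by
  have hd : (fun ξ => ENNReal.ofReal (surfJ ξ)) =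
      fun ξ => ((Real.toNNReal (surfJ ξ) : ℝ≥0) : ℝ≥0∞) := rfl
  rw [σS, hd, integral_withDensity_eq_integral_smul (measurable_surfJ.real_toNNReal) h, ← integral_indicator
    (by exact measurableSet_closedBall)]
  have he : (fun x => Real.toNNReal (surfJ x) • h x) = fun x => (surfJ x : ℂ) * h x := by
    funext x
    rw [NNReal.smul_def, Real.coe_toNNReal _ (surfJ_pos x).le, Complex.real_smul]
  rw [he]


variable (K : ℕ) (a b : ℤ)

def c1 : ℝ := ((a : ℝ) + 1/2) / K
def c2 : ℝ := ((b : ℝ) + 1/2) / K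
def phi (η : ℝ × ℝ) : ℝ × ℝ := (c1 K a + (K:ℝ)⁻¹ * η.1, c2 K b + (K:ℝ)⁻¹ * η.2)
def Qset : Set (ℝ × ℝ) := Set.Ico (-(1/2) : ℝ) (1/2) ×ˢ Set.Ico (-(1/2) : ℝ) (1/2)
def gsc (f : ℝ × ℝ → ℂ) : ℝ × ℝ → ℂ :=
  (Qset ∩ phi K a b ⁻¹' D1).indicator fun η =>
    ((((K:ℝ)^2)⁻¹ * (surfJ (phi K a b η) / surfJ η) : ℝ) : ℂ) * f (phi K a b η)
def Am : Matrix (Fin 3) (Fin 3) ℝ :=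
  !![(K:ℝ)⁻¹, 0, c2 K b / K; 0, (K:ℝ)⁻¹, c1 K a / K; 0, 0, ((K:ℝ)^2)⁻¹]
def Al : E3 →ₗ[ℝ] E3 := Matrix.toEuclideanLin (Am K a b)
def theta (x : E3) : ℝ := x 0 * c1 K a + x 1 * c2 K b + x 2 * (c1 K a * c2 K b)

lemma Al_apply (x : E3) :
    Al K a b x 0 = (K:ℝ)⁻¹ * x 0 + c2 K b / K * x 2 ∧
    Al K a b x 1 = (K:ℝ)⁻¹ * x 1 + c1 K a / K * x 2 ∧
    Al K a b x 2 = ((K:ℝ)^2)⁻¹ * x 2 := by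
  refine ⟨?_, ?_, ?_⟩ <;>
    simp [Al, Am, Matrix.toEuclideanLin, Matrix.mulVec, dotProduct, Fin.sum_univ_three,
      Matrix.vecHead, Matrix.vecTail]

lemma det_Al : LinearMap.det (Al K a b) = ((K:ℝ)^4)⁻¹ := by
  rw [Al, Matrix.toEuclideanLin_eq_toLin, LinearMap.det_toLin]
  simp [Am, Matrix.det_fin_three, Matrix.vecHead, Matrix.vecTail]
  ring

lemma mem_capSq_iff (hK : 1 ≤ K) (η : ℝ × ℝ) :
    phi K a b η ∈ capSq K (a, b) ↔ η ∈ Qset := by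
  have hK0 : (0:ℝ) < K := by exact_mod_cast hK
  have h1 : (phi K a b η).1 = ((a:ℝ) + 1/2 + η.1) / K := by
    rw [phi, c1]; field_simp
  have h2 : (phi K a b η).2 = ((b:ℝ) + 1/2 + η.2) / K := by
    rw [phi, c2]; field_simp
  have hcs : capSq K (a,b) = Set.Ico ((a:ℝ)/K) (((a:ℝ)+1)/K) ×ˢ
      Set.Ico ((b:ℝ)/K) (((b:ℝ)+1)/K) := rfl
  rw [hcs, Qset, Set.mem_prod, Set.mem_prod, Set.mem_Ico, Set.mem_Ico, Set.mem_Ico,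
    Set.mem_Ico, h1, h2]
  rw [div_le_div_iff_of_pos_right hK0, div_le_div_iff_of_pos_right hK0, div_lt_div_iff_of_pos_right hK0,
    div_lt_div_iff_of_pos_right hK0]
  constructor <;> rintro ⟨⟨u1, u2⟩, v1, v2⟩ <;>
    exact ⟨⟨by linarith, by linarith⟩, by linarith, by linarith⟩

lemma Qset_subset_D1 : Qset ⊆ D1 := by
  rintro ⟨η1, η2⟩ ⟨h1, h2⟩
  simp only [Set.mem_Ico] at h1 h2
  rw [D1, Metric.mem_closedBall, dist_zero_right, Prod.norm_def]
  refine max_le ?_ ?_ <;> rw [Real.norm_eq_abs, abs_le] <;> constructor <;> simp at h1 h2 ⊢ <;>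
    linarith

lemma phase_eq (hK : 1 ≤ K) (x : E3) (η : ℝ × ℝ) :
    x 0 * (phi K a b η).1 + x 1 * (phi K a b η).2
        + x 2 * ((phi K a b η).1 * (phi K a b η).2)
      = theta K a b x + (Al K a b x 0 * η.1 + Al K a b x 1 * η.2
          + Al K a b x 2 * (η.1 * η.2)) := by
  obtain ⟨e0, e1, e2⟩ := Al_apply K a b x
  rw [e0, e1, e2, phi, theta]
  ring

end PR

namespace PR2
open PR

open Classical in
def Wfun (K : ℕ) (a b : ℤ) (f : ℝ × ℝ → ℂ) (η : ℝ × ℝ) : ℂ :=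
  if phi K a b η ∈ D1 then (surfJ (phi K a b η) : ℂ) * capPiece K (a, b) f (phi K a b η) else 0

def phE (K : ℕ) (a b : ℤ) (x : E3) (η : ℝ × ℝ) : ℂ :=
  Complex.exp (Complex.I * ((Al K a b x 0 * η.1 + Al K a b x 1 * η.2
    + Al K a b x 2 * (η.1 * η.2) : ℝ) : ℂ))

lemma cov_integral (K : ℕ) (a b : ℤ) (hK : 1 ≤ K) (F : ℝ × ℝ → ℂ) :
    ∫ η, F (phi K a b η) ∂volume = ((K:ℝ)^2) • ∫ ξ, F ξ ∂volume := by
  have hK0 : (0:ℝ) < K := by exact_mod_cast hK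
  have h1 : ∀ η : ℝ × ℝ, phi K a b η = (c1 K a, c2 K b) + (K:ℝ)⁻¹ • η := fun η => rfl
  calc ∫ η, F (phi K a b η) ∂volume
      = ∫ η, (fun ξ => F ((c1 K a, c2 K b) + ξ)) ((K:ℝ)⁻¹ • η) ∂volume := by
        simp only [h1]
    _ = |(((K:ℝ)⁻¹) ^ (Module.finrank ℝ (ℝ × ℝ)))⁻¹| •
          ∫ ξ, F ((c1 K a, c2 K b) + ξ) ∂volume := by
        exact MeasureTheory.Measure.integral_comp_smul volume
          (fun ξ => F ((c1 K a, c2 K b) + ξ)) (K:ℝ)⁻¹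
    _ = ((K:ℝ)^2) • ∫ ξ, F ξ ∂volume := by
        rw [integral_add_left_eq_self]
        congr 1
        rw [show Module.finrank ℝ (ℝ × ℝ) = 2 by simp]
        rw [abs_of_pos (by positivity)]
        field_simp

lemma key (K : ℕ) (a b : ℤ) (hK : 1 ≤ K) (f : ℝ × ℝ → ℂ) (x : E3) :
    extOp (capPiece K (a, b) f) x
      = Complex.exp (Complex.I * ((theta K a b x : ℝ) : ℂ))
          * extOp (gsc K a b f) (Al K a b x) := by
  classical
  have hK0 : (0:ℝ) < K := by exact_mod_cast hK
  have hexp : ∀ r s : ℝ,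
      Complex.exp (Complex.I * ((r + s : ℝ) : ℂ))
        = Complex.exp (Complex.I * (r:ℂ)) * Complex.exp (Complex.I * (s:ℂ)) := by
    intro r s
    rw [← Complex.exp_add]
    push_cast
    ring_nf
  have hL : extOp (capPiece K (a, b) f) x
      = (((K:ℝ)^2)⁻¹ : ℝ) • (Complex.exp (Complex.I * ((theta K a b x : ℝ) : ℂ)) *
          ∫ η, phE K a b x η * Wfun K a b f η ∂volume) := by
    rw [extOp, integral_σS]
    have hcov := cov_integral K a b hK
      (fun ξ => D1.indicator (fun ξ => (surfJ ξ : ℂ) *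
        (Complex.exp (Complex.I * ((x 0 * ξ.1 + x 1 * ξ.2 + x 2 * (ξ.1 * ξ.2) : ℝ) : ℂ)) *
          capPiece K (a, b) f ξ)) ξ)
    have hinv : ∀ z : ℂ, z = (((K:ℝ)^2)⁻¹ : ℝ) • (((K:ℝ)^2 : ℝ) • z) := by
      intro z; rw [smul_smul, inv_mul_cancel₀ (by positivity)]; simp
    rw [hinv (∫ ξ, D1.indicator _ ξ ∂volume), ← hcov]
    congr 1
    have hptw : ∀ η : ℝ × ℝ,
        D1.indicator (fun ξ => (surfJ ξ : ℂ) *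
            (Complex.exp (Complex.I * ((x 0 * ξ.1 + x 1 * ξ.2 + x 2 * (ξ.1 * ξ.2) : ℝ) : ℂ)) *
              capPiece K (a, b) f ξ)) (phi K a b η)
          = Complex.exp (Complex.I * ((theta K a b x : ℝ) : ℂ))
              * (phE K a b x η * Wfun K a b f η) := by
      intro η
      rw [Set.indicator_apply, Wfun]
      by_cases hd : phi K a b η ∈ D1
      · rw [if_pos hd, if_pos hd]
        rw [phase_eq K a b hK x η, hexp, phE]
        ring
      · rw [if_neg hd, if_neg hd]
        ring
    rw [show (fun η => D1.indicator (fun ξ => (surfJ ξ : ℂ) *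
          (Complex.exp (Complex.I * ((x 0 * ξ.1 + x 1 * ξ.2 + x 2 * (ξ.1 * ξ.2) : ℝ) : ℂ)) *
            capPiece K (a, b) f ξ)) (phi K a b η)) = fun η =>
        Complex.exp (Complex.I * ((theta K a b x : ℝ) : ℂ))
          * (phE K a b x η * Wfun K a b f η) from funext hptw]
    rw [integral_const_mul]
  have hR : extOp (gsc K a b f) (Al K a b x)
      = (((K:ℝ)^2)⁻¹ : ℂ) * ∫ η, phE K a b x η * Wfun K a b f η ∂volume := by
    rw [extOp, integral_σS]
    have hptw : ∀ η : ℝ × ℝ,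
        D1.indicator (fun η => (surfJ η : ℂ) *
            (Complex.exp (Complex.I * ((Al K a b x 0 * η.1 + Al K a b x 1 * η.2
              + Al K a b x 2 * (η.1 * η.2) : ℝ) : ℂ)) * gsc K a b f η)) η
          = (((K:ℝ)^2)⁻¹ : ℂ) * (phE K a b x η * Wfun K a b f η) := by
      intro η
      rw [Set.indicator_apply, Wfun, phE]
      by_cases hs : η ∈ Qset ∩ phi K a b ⁻¹' D1
      · obtain ⟨hQ, hD⟩ := hs
        have hD' : phi K a b η ∈ D1 := hD
        have hη1 : η ∈ D1 := Qset_subset_D1 hQ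
        rw [if_pos hη1, if_pos hD']
        rw [gsc, Set.indicator_of_mem (Set.mem_inter hQ hD)]
        rw [capPiece, Set.indicator_of_mem ((mem_capSq_iff K a b hK η).2 hQ)]
        have hJη : (surfJ η : ℂ) ≠ 0 := by exact_mod_cast (surfJ_pos η).ne'
        have hKC : ((K:ℝ) : ℂ) ≠ 0 := by exact_mod_cast hK0.ne'
        have hsc : (((((K:ℝ)^2)⁻¹ * (surfJ (phi K a b η) / surfJ η) : ℝ)) : ℂ) * (surfJ η : ℂ)
            = ((((K:ℝ) : ℂ))^2)⁻¹ * (surfJ (phi K a b η) : ℂ) := by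
          push_cast
          field_simp
          try rw [mul_div_mul_right _ _ hJη]
          try ring_nf
        linear_combination (Complex.exp (Complex.I * ((Al K a b x 0 * η.1 + Al K a b x 1 * η.2
          + Al K a b x 2 * (η.1 * η.2) : ℝ) : ℂ)) * f (phi K a b η)) * hsc
      · have hg : gsc K a b f η = 0 := Set.indicator_of_notMem hs _
        rw [hg]
        have hWz : (if phi K a b η ∈ D1 then (surfJ (phi K a b η) : ℂ)
            * capPiece K (a, b) f (phi K a b η) else 0) = 0 := by
          by_cases hd : phi K a b η ∈ D1
          · rw [if_pos hd]
            have hQn : η ∉ Qset := fun hQ => hs ⟨hQ, hd⟩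
            rw [capPiece, Set.indicator_of_notMem
              (fun hc => hQn ((mem_capSq_iff K a b hK η).1 hc))]
            ring
          · rw [if_neg hd]
        rw [hWz]
        by_cases hη1 : η ∈ D1
        · rw [if_pos hη1]; ring
        · rw [if_neg hη1]; ring
    rw [show (fun η => D1.indicator (fun η => (surfJ η : ℂ) *
          (Complex.exp (Complex.I * ((Al K a b x 0 * η.1 + Al K a b x 1 * η.2
            + Al K a b x 2 * (η.1 * η.2) : ℝ) : ℂ)) * gsc K a b f η)) η) = fun η =>
        (((K:ℝ)^2)⁻¹ : ℂ) * (phE K a b x η * Wfun K a b f η) from funext hptw]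
    rw [integral_const_mul]
  rw [hL, hR]
  rw [Complex.real_smul]
  push_cast
  ring

end PR2

namespace PR3
open PR PR2

lemma normE3 (x : E3) : ‖x‖ = Real.sqrt (x 0 ^ 2 + x 1 ^ 2 + x 2 ^ 2) := by
  rw [EuclideanSpace.norm_eq]
  simp [Fin.sum_univ_three, sq_abs]

lemma coord_abs_le_norm (x : E3) (i : Fin 3) : |x i| ≤ ‖x‖ := by
  rw [normE3, ← Real.sqrt_sq_eq_abs]
  apply Real.sqrt_le_sqrt
  have q0 := sq_nonneg (x 0); have q1 := sq_nonneg (x 1); have q2 := sq_nonneg (x 2)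
  fin_cases i
  · show x 0 ^ 2 ≤ x 0 ^ 2 + x 1 ^ 2 + x 2 ^ 2; linarith
  · show x 1 ^ 2 ≤ x 0 ^ 2 + x 1 ^ 2 + x 2 ^ 2; linarith
  · show x 2 ^ 2 ≤ x 0 ^ 2 + x 1 ^ 2 + x 2 ^ 2; linarith

lemma c1_abs_le (K : ℕ) (a : ℤ) (hK : 1 ≤ K) (ha : |a| ≤ (K:ℤ) + 1) : |c1 K a| ≤ 3 := by
  have hK1 : (1:ℝ) ≤ K := by exact_mod_cast hK
  have ha' : |(a:ℝ)| ≤ (K:ℝ) + 1 := by exact_mod_cast ha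
  rw [c1, abs_div, abs_of_pos (by linarith : (0:ℝ) < K), div_le_iff₀ (by linarith : (0:ℝ) < K)]
  calc |(a:ℝ) + 1/2| ≤ |(a:ℝ)| + |1/2| := abs_add_le _ _
    _ ≤ (K:ℝ) + 1 + 1/2 := by rw [abs_of_pos (by norm_num : (0:ℝ) < 1/2)]; linarith
    _ ≤ 3 * K := by linarith

lemma c2_abs_le (K : ℕ) (b : ℤ) (hK : 1 ≤ K) (hb : |b| ≤ (K:ℤ) + 1) : |c2 K b| ≤ 3 :=
  c1_abs_le K b hK hb

lemma norm_Al_le (K : ℕ) (a b : ℤ) (hK : 1 ≤ K) (ha : |a| ≤ (K:ℤ) + 1) (hb : |b| ≤ (K:ℤ) + 1)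
    (x : E3) (R : ℝ) (hR : 0 ≤ R) (hx : ‖x‖ ≤ R) : ‖Al K a b x‖ ≤ 6 * R := by
  have hK1 : (1:ℝ) ≤ K := by exact_mod_cast hK
  obtain ⟨e0, e1, e2⟩ := Al_apply K a b x
  have hx0 : |x 0| ≤ R := le_trans (coord_abs_le_norm x 0) hx
  have hx1 : |x 1| ≤ R := le_trans (coord_abs_le_norm x 1) hx
  have hx2 : |x 2| ≤ R := le_trans (coord_abs_le_norm x 2) hx
  have hc1 := c1_abs_le K a hK ha
  have hc2 := c2_abs_le K b hK hb
  have hKinv : (K:ℝ)⁻¹ ≤ 1 := by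
    rw [inv_le_one_iff₀]; right; exact hK1
  have hKinv0 : (0:ℝ) < (K:ℝ)⁻¹ := by positivity
  have h0 : |Al K a b x 0| ≤ 4 * R := by
    rw [e0]
    calc |(K:ℝ)⁻¹ * x 0 + c2 K b / K * x 2| ≤ |(K:ℝ)⁻¹ * x 0| + |c2 K b / K * x 2| := abs_add_le _ _
      _ = (K:ℝ)⁻¹ * |x 0| + |c2 K b| * (K:ℝ)⁻¹ * |x 2| := by
          rw [abs_mul, abs_mul, abs_div, abs_of_pos (by linarith : (0:ℝ) < (K:ℝ)),
            abs_of_pos hKinv0, div_eq_mul_inv]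
      _ ≤ 1 * R + 3 * 1 * R := by
          have h1 : (K:ℝ)⁻¹ * |x 0| ≤ 1 * R := by
            apply mul_le_mul hKinv hx0 (abs_nonneg _) zero_le_one
          have h2 : |c2 K b| * (K:ℝ)⁻¹ * |x 2| ≤ 3 * 1 * R := by
            apply mul_le_mul (mul_le_mul hc2 hKinv hKinv0.le (by norm_num)) hx2 (abs_nonneg _)
              (by norm_num)
          linarith
      _ = 4 * R := by ring
  have h1 : |Al K a b x 1| ≤ 4 * R := by
    rw [e1]
    calc |(K:ℝ)⁻¹ * x 1 + c1 K a / K * x 2| ≤ |(K:ℝ)⁻¹ * x 1| + |c1 K a / K * x 2| := abs_add_le _ _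
      _ = (K:ℝ)⁻¹ * |x 1| + |c1 K a| * (K:ℝ)⁻¹ * |x 2| := by
          rw [abs_mul, abs_mul, abs_div, abs_of_pos (by linarith : (0:ℝ) < (K:ℝ)),
            abs_of_pos hKinv0, div_eq_mul_inv]
      _ ≤ 1 * R + 3 * 1 * R := by
          have h1' : (K:ℝ)⁻¹ * |x 1| ≤ 1 * R := by
            apply mul_le_mul hKinv hx1 (abs_nonneg _) zero_le_one
          have h2 : |c1 K a| * (K:ℝ)⁻¹ * |x 2| ≤ 3 * 1 * R := by
            apply mul_le_mul (mul_le_mul hc1 hKinv hKinv0.le (by norm_num)) hx2 (abs_nonneg _)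
              (by norm_num)
          linarith
      _ = 4 * R := by ring
  have h2 : |Al K a b x 2| ≤ R := by
    rw [e2, abs_mul]
    have : |((K:ℝ)^2)⁻¹| ≤ 1 := by
      rw [abs_of_pos (by positivity)]
      rw [inv_le_one_iff₀]; right; nlinarith
    calc |((K:ℝ)^2)⁻¹| * |x 2| ≤ 1 * R := mul_le_mul this hx2 (abs_nonneg _) zero_le_one
      _ = R := one_mul R
  rw [normE3]
  rw [show 6 * R = Real.sqrt ((6*R)^2) by rw [Real.sqrt_sq (by linarith)]]
  apply Real.sqrt_le_sqrt
  nlinarith [abs_nonneg (Al K a b x 0), abs_nonneg (Al K a b x 1), abs_nonneg (Al K a b x 2),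
    sq_abs (Al K a b x 0), sq_abs (Al K a b x 1), sq_abs (Al K a b x 2)]

lemma cov_lintegral (K : ℕ) (a b : ℤ) (hK : 1 ≤ K) (R : ℝ) (hR : 0 < R)
    (ha : |a| ≤ (K:ℤ) + 1) (hb : |b| ≤ (K:ℤ) + 1) (H : E3 → ℝ≥0∞) (hH : Measurable H) :
    ∫⁻ x in Metric.closedBall (0:E3) R, H (Al K a b x) ∂volume
      ≤ ENNReal.ofReal ((K:ℝ)^4) * ∫⁻ y in Metric.closedBall (0:E3) (6*R), H y ∂volume := by
  have hK0 : (0:ℝ) < K := by exact_mod_cast hK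
  have hdet : LinearMap.det (Al K a b) ≠ 0 := by rw [det_Al]; positivity
  have hmeas : Measurable (Al K a b) := (Al K a b).continuous_of_finiteDimensional.measurable
  have step1 : ∫⁻ x in Metric.closedBall (0:E3) R, H (Al K a b x) ∂volume
      ≤ ∫⁻ x, (Metric.closedBall (0:E3) (6*R)).indicator H (Al K a b x) ∂volume := by
    rw [← lintegral_indicator measurableSet_closedBall]
    apply lintegral_mono
    intro x
    classical
    simp only [Set.indicator_apply]
    by_cases hx : x ∈ Metric.closedBall (0:E3) R
    · have hx' : Al K a b x ∈ Metric.closedBall (0:E3) (6*R) := by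
        rw [Metric.mem_closedBall, dist_zero_right]
        exact norm_Al_le K a b hK ha hb x R hR.le
          (by rwa [Metric.mem_closedBall, dist_zero_right] at hx)
      rw [if_pos hx, if_pos hx']
    · rw [if_neg hx]
      exact zero_le
  have step2 : ∫⁻ x, (Metric.closedBall (0:E3) (6*R)).indicator H (Al K a b x) ∂volume
      = ENNReal.ofReal ((K:ℝ)^4)
          * ∫⁻ y in Metric.closedBall (0:E3) (6*R), H y ∂volume := by
    rw [← lintegral_map (hH.indicator measurableSet_closedBall) hmeas,
      Measure.map_linearMap_addHaar_eq_smul_addHaar volume hdet, lintegral_smul_measure,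
      lintegral_indicator measurableSet_closedBall, det_Al, inv_inv,
      abs_of_pos (by positivity : (0:ℝ) < (K:ℝ)^4), smul_eq_mul]
  exact step1.trans step2.le

def Vset : Finset (ℤ × ℤ × ℤ) :=
  (Finset.Icc (-12) 12) ×ˢ ((Finset.Icc (-12) 12) ×ˢ (Finset.Icc (-12) 12))

def ctrV (R : ℝ) (v : ℤ × ℤ × ℤ) : E3 :=
  (WithLp.equiv 2 (Fin 3 → ℝ)).symm ![(v.1:ℝ)*(R/2), (v.2.1:ℝ)*(R/2), (v.2.2:ℝ)*(R/2)]

lemma round_abs_le {t : ℝ} (ht : |t| ≤ 12) : |round t| ≤ (12:ℤ) := by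
  have h1 : |t - round t| ≤ 1/2 := abs_sub_round t
  have h2 : |((round t : ℤ) : ℝ)| ≤ 12.5 := by
    calc |((round t : ℤ) : ℝ)| = |t - (t - round t)| := by ring_nf
      _ ≤ |t| + |t - round t| := abs_sub _ _
      _ ≤ 12.5 := by linarith
  have h3 : |((round t : ℤ) : ℝ)| < 13 := lt_of_le_of_lt h2 (by norm_num)
  have h5 : |round t| < (13:ℤ) := by exact_mod_cast h3
  omega

lemma covering (R : ℝ) (hR : 1 < R) :
    Metric.closedBall (0:E3) (6*R)
      ⊆ ⋃ v ∈ Vset, Metric.closedBall (ctrV R v) ((R+1)/2) := by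
  intro y hy
  rw [Metric.mem_closedBall, dist_zero_right] at hy
  have hR0 : (0:ℝ) < R := by linarith
  have hcoord : ∀ i : Fin 3, |y i / (R/2)| ≤ 12 := by
    intro i
    rw [abs_div, abs_of_pos (by linarith : (0:ℝ) < R/2), div_le_iff₀ (by linarith : (0:ℝ) < R/2)]
    calc |y i| ≤ ‖y‖ := coord_abs_le_norm y i
      _ ≤ 6 * R := hy
      _ = 12 * (R/2) := by ring
  set v : ℤ × ℤ × ℤ := (round (y 0 / (R/2)), round (y 1 / (R/2)), round (y 2 / (R/2))) with hv
  have hvmem : v ∈ Vset := by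
    rw [Vset, Finset.mem_product, Finset.mem_product]
    refine ⟨?_, ?_, ?_⟩ <;> rw [Finset.mem_Icc, ← abs_le] <;>
      [exact round_abs_le (hcoord 0); exact round_abs_le (hcoord 1); exact round_abs_le (hcoord 2)]
  have hdist : ∀ i : Fin 3, |y i - ctrV R v i| ≤ R/4 := by
    intro i
    have hc : ctrV R v i = (round (y i / (R/2)) : ℝ) * (R/2) := by
      fin_cases i <;> simp [ctrV, hv]
    rw [hc]
    have h1 : |y i / (R/2) - round (y i / (R/2))| ≤ 1/2 := abs_sub_round _
    have h2 : y i - (round (y i / (R/2)) : ℝ) * (R/2)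
        = (y i / (R/2) - round (y i / (R/2))) * (R/2) := by
      field_simp
    rw [h2, abs_mul, abs_of_pos (by linarith : (0:ℝ) < R/2)]
    calc |y i / (R/2) - (round (y i / (R/2)) : ℝ)| * (R/2) ≤ (1/2) * (R/2) :=
          mul_le_mul_of_nonneg_right h1 (by linarith)
      _ = R/4 := by ring
  apply Set.mem_biUnion hvmem
  rw [Metric.mem_closedBall, dist_eq_norm, normE3]
  have hsub : ∀ i : Fin 3, (y - ctrV R v) i = y i - ctrV R v i := fun i => rfl
  rw [hsub 0, hsub 1, hsub 2]
  rw [show (R+1)/2 = Real.sqrt (((R+1)/2)^2) by rw [Real.sqrt_sq (by linarith)]]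
  apply Real.sqrt_le_sqrt
  have h0 := hdist 0; have h1 := hdist 1; have h2 := hdist 2
  nlinarith [abs_nonneg (y 0 - ctrV R v 0), abs_nonneg (y 1 - ctrV R v 1),
    abs_nonneg (y 2 - ctrV R v 2), sq_abs (y 0 - ctrV R v 0), sq_abs (y 1 - ctrV R v 1),
    sq_abs (y 2 - ctrV R v 2)]

end PR3

namespace PR4
open PR PR2 PR3

lemma phi_preimage_null (K : ℕ) (a b : ℤ) (hK : 1 ≤ K) {N : Set (ℝ × ℝ)}
    (hN : volume N = 0) : volume (phi K a b ⁻¹' N) = 0 := by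
  have hK0 : ((K:ℝ))⁻¹ ≠ 0 := by
    have : (0:ℝ) < K := by exact_mod_cast hK
    positivity
  have hsplit : phi K a b ⁻¹' N
      = (fun η : ℝ × ℝ => (K:ℝ)⁻¹ • η) ⁻¹' ((fun ξ : ℝ × ℝ => (c1 K a, c2 K b) + ξ) ⁻¹' N) := by
    rfl
  rw [hsplit]
  have h1 : volume ((fun ξ : ℝ × ℝ => (c1 K a, c2 K b) + ξ) ⁻¹' N) = 0 := by
    rw [measure_preimage_add]
    exact hN
  rw [Measure.addHaar_preimage_smul volume hK0]
  simp [h1]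

lemma phi_transfer_ae (K : ℕ) (a b : ℤ) (hK : 1 ≤ K) {P : ℝ × ℝ → Prop}
    (hP : ∀ᵐ ξ ∂σS, P ξ) :
    ∀ᵐ η ∂(volume : Measure (ℝ × ℝ)), phi K a b η ∈ D1 → P (phi K a b η) := by
  set N₀ : Set (ℝ × ℝ) := {ξ | ¬ P ξ} with hN₀
  have hσ : σS N₀ = 0 := by
    rw [ae_iff] at hP
    exact hP
  have hres : volume.restrict D1 N₀ = 0 := σS_null hσ
  have hvol : volume (N₀ ∩ D1) = 0 := by
    rwa [Measure.restrict_apply' (by exact measurableSet_closedBall)] at hres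
  have hpre : volume (phi K a b ⁻¹' (N₀ ∩ D1)) = 0 :=
    phi_preimage_null K a b hK hvol
  rw [ae_iff]
  apply measure_mono_null _ hpre
  intro η hη
  simp only [Set.mem_setOf_eq, not_forall] at hη
  obtain ⟨hD, hnP⟩ := hη
  exact ⟨hnP, hD⟩

lemma capPiece_ae_bound (K : ℕ) (ab : ℤ × ℤ) (f : ℝ × ℝ → ℂ) (hf : MemLp f ⊤ σS) :
    ∀ᵐ ξ ∂σS, ‖capPiece K ab f ξ‖ ≤ (eLpNorm (capPiece K ab f) ⊤ σS).toReal := by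
  have hms : MeasurableSet (capSq K ab) :=
    (measurableSet_Ico.prod measurableSet_Ico)
  have hfi : MemLp (capPiece K ab f) ⊤ σS := hf.indicator hms
  have hne : eLpNorm (capPiece K ab f) ⊤ σS ≠ ⊤ := hfi.2.ne
  have h := ae_le_eLpNormEssSup (f := capPiece K ab f) (μ := σS)
  filter_upwards [h] with ξ hξ
  have : ((‖capPiece K ab f ξ‖₊ : ℝ≥0∞)).toReal ≤ (eLpNormEssSup (capPiece K ab f) σS).toReal :=
    ENNReal.toReal_mono (by rwa [eLpNorm_exponent_top] at hne) (by exact_mod_cast hξ)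
  rw [eLpNorm_exponent_top]
  rwa [ENNReal.coe_toReal, coe_nnnorm] at this

lemma gsc_ae_bound (K : ℕ) (a b : ℤ) (hK : 1 ≤ K) (f : ℝ × ℝ → ℂ) {M : ℝ} (hM : 0 ≤ M)
    (hf : ∀ᵐ ξ ∂σS, ‖capPiece K (a, b) f ξ‖ ≤ M) :
    ∀ᵐ η ∂(volume : Measure (ℝ × ℝ)), ‖gsc K a b f η‖ ≤ 2 * ((K:ℝ)^2)⁻¹ * M := by
  have hK0 : (0:ℝ) < K := by exact_mod_cast hK
  filter_upwards [phi_transfer_ae K a b hK hf] with η hη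
  by_cases hs : η ∈ Qset ∩ phi K a b ⁻¹' D1
  · obtain ⟨hQ, hD⟩ := hs
    have hD' : phi K a b η ∈ D1 := hD
    have hb : ‖capPiece K (a, b) f (phi K a b η)‖ ≤ M := hη hD'
    rw [gsc, Set.indicator_of_mem (Set.mem_inter hQ hD)]
    have hfeq : f (phi K a b η) = capPiece K (a, b) f (phi K a b η) := by
      rw [capPiece, Set.indicator_of_mem ((mem_capSq_iff K a b hK η).2 hQ)]
    rw [norm_mul, hfeq]
    have hsc : ‖((((K:ℝ)^2)⁻¹ * (surfJ (phi K a b η) / surfJ η) : ℝ) : ℂ)‖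
        ≤ 2 * ((K:ℝ)^2)⁻¹ := by
      rw [Complex.norm_real, Real.norm_eq_abs]
      have hJφ : surfJ (phi K a b η) ≤ 2 := surfJ_le_two hD'
      have hJη : 1 ≤ surfJ η := one_le_surfJ η
      have h1 : surfJ (phi K a b η) / surfJ η ≤ 2 := by
        rw [div_le_iff₀ (by linarith : (0:ℝ) < surfJ η)]
        nlinarith
      have h2 : 0 ≤ surfJ (phi K a b η) / surfJ η := div_nonneg (surfJ_pos _).le (surfJ_pos _).le
      rw [abs_of_nonneg (mul_nonneg (by positivity) h2)]
      calc ((K:ℝ)^2)⁻¹ * (surfJ (phi K a b η) / surfJ η) ≤ ((K:ℝ)^2)⁻¹ * 2 :=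
            mul_le_mul_of_nonneg_left h1 (by positivity)
        _ = 2 * ((K:ℝ)^2)⁻¹ := by ring
    calc ‖((((K:ℝ)^2)⁻¹ * (surfJ (phi K a b η) / surfJ η) : ℝ) : ℂ)‖
          * ‖capPiece K (a, b) f (phi K a b η)‖
        ≤ (2 * ((K:ℝ)^2)⁻¹) * M := by
          apply mul_le_mul hsc hb (norm_nonneg _) (by positivity)
      _ = 2 * ((K:ℝ)^2)⁻¹ * M := by ring
  · rw [gsc, Set.indicator_of_notMem hs]
    simp only [norm_zero]
    positivity

lemma continuous_surfJ : Continuous surfJ := by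
  apply Real.continuous_sqrt.comp
  fun_prop

lemma continuous_phi (K : ℕ) (a b : ℤ) : Continuous (phi K a b) := by
  have h : phi K a b = fun η : ℝ × ℝ => ((c1 K a + (K:ℝ)⁻¹ * η.1, c2 K b + (K:ℝ)⁻¹ * η.2) : ℝ × ℝ) := rfl
  rw [h]
  fun_prop

lemma measurable_phi (K : ℕ) (a b : ℤ) : Measurable (phi K a b) :=
  (continuous_phi K a b).measurable

lemma measurableSet_QD (K : ℕ) (a b : ℤ) : MeasurableSet (Qset ∩ phi K a b ⁻¹' D1) :=
  (measurableSet_Ico.prod measurableSet_Ico).inter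
    ((measurable_phi K a b) measurableSet_closedBall)

lemma gsc_aesm (K : ℕ) (a b : ℤ) (hK : 1 ≤ K) (f : ℝ × ℝ → ℂ)
    (hf : AEStronglyMeasurable f σS) :
    AEStronglyMeasurable (gsc K a b f) (volume : Measure (ℝ × ℝ)) := by
  obtain ⟨f', hf'sm, hff'⟩ := hf
  set g' : ℝ × ℝ → ℂ := (Qset ∩ phi K a b ⁻¹' D1).indicator fun η =>
    ((((K:ℝ)^2)⁻¹ * (surfJ (phi K a b η) / surfJ η) : ℝ) : ℂ) * f' (phi K a b η) with hg'
  have hg'sm : StronglyMeasurable g' := by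
    apply StronglyMeasurable.indicator _ (measurableSet_QD K a b)
    apply StronglyMeasurable.mul
    · apply Continuous.stronglyMeasurable
      apply Continuous.comp Complex.continuous_ofReal
      apply Continuous.mul continuous_const
      exact ((continuous_surfJ.comp (continuous_phi K a b)).div continuous_surfJ
        fun η => (surfJ_pos η).ne')
    · exact hf'sm.comp_measurable (measurable_phi K a b)
  refine ⟨g', hg'sm, ?_⟩
  have hae : ∀ᵐ η ∂(volume : Measure (ℝ × ℝ)),
      phi K a b η ∈ D1 → f (phi K a b η) = f' (phi K a b η) :=
    phi_transfer_ae K a b hK hff'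
  filter_upwards [hae] with η hη
  by_cases hs : η ∈ Qset ∩ phi K a b ⁻¹' D1
  · rw [gsc, hg', Set.indicator_of_mem hs, Set.indicator_of_mem hs, hη hs.2]
  · rw [gsc, hg', Set.indicator_of_notMem hs, Set.indicator_of_notMem hs]

lemma gsc_memLp (K : ℕ) (a b : ℤ) (hK : 1 ≤ K) (f : ℝ × ℝ → ℂ) (hf : MemLp f ⊤ σS) :
    MemLp (gsc K a b f) ⊤ σS ∧
      eLpNorm (gsc K a b f) ⊤ σS
        ≤ ENNReal.ofReal (2 * ((K:ℝ)^2)⁻¹ * (eLpNorm (capPiece K (a, b) f) ⊤ σS).toReal) := by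
  have hK0 : (0:ℝ) < K := by exact_mod_cast hK
  set M : ℝ := (eLpNorm (capPiece K (a, b) f) ⊤ σS).toReal with hM
  have hM0 : 0 ≤ M := ENNReal.toReal_nonneg
  have hbd : ∀ᵐ η ∂(volume : Measure (ℝ × ℝ)), ‖gsc K a b f η‖ ≤ 2 * ((K:ℝ)^2)⁻¹ * M :=
    gsc_ae_bound K a b hK f hM0 (capPiece_ae_bound K (a, b) f hf)
  have hbdσ : ∀ᵐ η ∂σS, ‖gsc K a b f η‖ ≤ 2 * ((K:ℝ)^2)⁻¹ * M :=
    hbd.filter_mono σS_ac.ae_le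
  have haesm : AEStronglyMeasurable (gsc K a b f) σS :=
    (gsc_aesm K a b hK f hf.1).mono_ac σS_ac
  have hsnorm : eLpNorm (gsc K a b f) ⊤ σS ≤ ENNReal.ofReal (2 * ((K:ℝ)^2)⁻¹ * M) := by
    rw [eLpNorm_exponent_top]
    exact eLpNormEssSup_le_of_ae_bound hbdσ
  exact ⟨⟨haesm, lt_of_le_of_lt hsnorm ENNReal.ofReal_lt_top⟩, hsnorm⟩

lemma continuous_extOp (g : ℝ × ℝ → ℂ) (hg : MemLp g ⊤ σS) : Continuous (extOp g) := by
  apply continuous_of_dominated (bound := fun ξ => ‖g ξ‖)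
  · intro x
    apply AEStronglyMeasurable.mul _ hg.1
    apply Continuous.aestronglyMeasurable
    apply Complex.continuous_exp.comp
    apply Continuous.mul continuous_const
    apply Complex.continuous_ofReal.comp
    fun_prop
  · intro x
    filter_upwards with ξ
    rw [norm_mul]
    have : ‖Complex.exp (Complex.I *
        ((x 0 * ξ.1 + x 1 * ξ.2 + x 2 * (ξ.1 * ξ.2) : ℝ) : ℂ))‖ = 1 := by
      rw [Complex.norm_exp]
      simp
    rw [this, one_mul]
  · exact (hg.integrable le_top).norm
  · filter_upwards with ξ
    apply Continuous.mul _ continuous_const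
    apply Complex.continuous_exp.comp
    apply Continuous.mul continuous_const
    apply Complex.continuous_ofReal.comp
    have h0 : Continuous fun x : E3 => x 0 := (EuclideanSpace.proj (0 : Fin 3)).continuous
    have h1 : Continuous fun x : E3 => x 1 := (EuclideanSpace.proj (1 : Fin 3)).continuous
    have h2 : Continuous fun x : E3 => x 2 := (EuclideanSpace.proj (2 : Fin 3)).continuous
    continuity

end PR4

namespace PR5
open PR PR2 PR3 PR4

lemma card_Vset : (Vset.card : ℝ≥0∞) = 15625 := by
  rw [Vset, Finset.card_product, Finset.card_product, Int.card_Icc]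
  rw [show ((12:ℤ) + 1 - -12).toNat = 25 from rfl]
  norm_num

lemma lintegral_biUnion_finset_le {ι : Type*} (s : Finset ι) (t : ι → Set E3) (f : E3 → ℝ≥0∞) :
    ∫⁻ y in ⋃ v ∈ s, t v, f y ∂volume ≤ ∑ v ∈ s, ∫⁻ y in t v, f y ∂volume := by
  classical
  induction s using Finset.induction with
  | empty => simp
  | insert x s hx ih =>
    rw [Finset.set_biUnion_insert, Finset.sum_insert hx]
    exact (lintegral_union_le _ _ _).trans (add_le_add le_rfl ih)

theorem main :
    ∃ C : ℝ, 0 < C ∧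
      ∀ ε Cε R : ℝ, 0 < ε → 0 < Cε → 1 < R → ∀ K : ℕ, 1 ≤ K → (K : ℝ) ≤ R →
        (∀ r : ℝ, 1 ≤ r → r < R → ∀ c : E3, ∀ g : ℝ × ℝ → ℂ, MemLp g ⊤ σS →
            eLpNorm (extOp g) (ENNReal.ofReal (13 / 4))
                (volume.restrict (Metric.closedBall c r))
              ≤ ENNReal.ofReal (Cε * r ^ ε) * eLpNorm g ⊤ σS) →
        ∀ ab ∈ capIdx K, ∀ f : ℝ × ℝ → ℂ, MemLp f ⊤ σS →
          eLpNorm (extOp (capPiece K ab f)) (ENNReal.ofReal (13 / 4))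
              (volume.restrict (Metric.closedBall (0 : E3) R))
            ≤ ENNReal.ofReal (C * Cε * (K : ℝ) ^ (-2 + 4 / (13 / 4) : ℝ) * R ^ ε) *
                eLpNorm (capPiece K ab f) ⊤ σS := by
  refine ⟨31250, by norm_num, ?_⟩
  intro ε Cε R hε hCε hR K hK hKR hyp ab hab f hf
  obtain ⟨a, b⟩ := ab
  have hK0 : (0:ℝ) < K := by exact_mod_cast hK
  have hR0 : (0:ℝ) < R := by linarith
  -- index bounds
  have hab' : |a| ≤ (K:ℤ) + 1 ∧ |b| ≤ (K:ℤ) + 1 := by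
    rw [capIdx, sqIdx, Finset.mem_product, Finset.mem_Icc, Finset.mem_Icc] at hab
    constructor <;> rw [abs_le] <;> push_cast <;> omega
  obtain ⟨ha, hb⟩ := hab'
  set p : ℝ≥0∞ := ENNReal.ofReal (13/4) with hp
  have hp0 : p ≠ 0 := by
    rw [hp]
    simp only [ne_eq, ENNReal.ofReal_eq_zero, not_le]
    norm_num
  have hptop : p ≠ ⊤ := ENNReal.ofReal_ne_top
  have hq : p.toReal = 13/4 := ENNReal.toReal_ofReal (by norm_num)
  set g : ℝ × ℝ → ℂ := gsc K a b f with hg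
  have hgmem : MemLp g ⊤ σS := (gsc_memLp K a b hK f hf).1
  have hgbd := (gsc_memLp K a b hK f hf).2
  set M : ℝ := (eLpNorm (capPiece K (a, b) f) ⊤ σS).toReal with hM
  -- pointwise norm equality
  have hnorm : ∀ x : E3,
      (‖extOp (capPiece K (a, b) f) x‖₊ : ℝ≥0∞) = (‖extOp g (Al K a b x)‖₊ : ℝ≥0∞) := by
    intro x
    rw [key K a b hK f x, nnnorm_mul]
    have h1 : ‖Complex.exp (Complex.I * ((theta K a b x : ℝ) : ℂ))‖₊ = 1 := by
      apply NNReal.coe_injective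
      simp [coe_nnnorm, Complex.norm_exp]
    rw [h1, one_mul]
  -- H and its measurability
  set H : E3 → ℝ≥0∞ := fun y => (‖extOp g y‖₊ : ℝ≥0∞) ^ (13/4 : ℝ) with hH
  have hHmeas : Measurable H := by
    apply Measurable.comp (ENNReal.continuous_rpow_const.measurable)
    exact (continuous_extOp g hgmem).measurable.enorm
  -- X : per-ball bound
  set X : ℝ≥0∞ := ENNReal.ofReal (Cε * ((R+1)/2) ^ ε) * eLpNorm g ⊤ σS with hX
  have hball : ∀ v : ℤ × ℤ × ℤ,
      ∫⁻ y in Metric.closedBall (ctrV R v) ((R+1)/2), H y ∂volume ≤ X ^ (13/4 : ℝ) := by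
    intro v
    have h1 : eLpNorm (extOp g) p (volume.restrict (Metric.closedBall (ctrV R v) ((R+1)/2)))
        ≤ X := by
      rw [hX]
      exact hyp ((R+1)/2) (by linarith) (by linarith) (ctrV R v) g hgmem
    have h2 : ∫⁻ y in Metric.closedBall (ctrV R v) ((R+1)/2), H y ∂volume
        = (eLpNorm (extOp g) p (volume.restrict (Metric.closedBall (ctrV R v) ((R+1)/2))))
            ^ (13/4 : ℝ) := by
      rw [eLpNorm_eq_lintegral_rpow_enorm_toReal hp0 hptop, hq, ← ENNReal.rpow_mul, one_div,
        inv_mul_cancel₀ (by norm_num : (13/4 : ℝ) ≠ 0), ENNReal.rpow_one]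
      rfl
    rw [h2]
    exact ENNReal.rpow_le_rpow h1 (by norm_num)
  -- main chain
  rw [eLpNorm_eq_lintegral_rpow_enorm_toReal hp0 hptop, hq]
  have hstep1 : ∫⁻ x in Metric.closedBall (0:E3) R,
      (‖extOp (capPiece K (a, b) f) x‖₊ : ℝ≥0∞) ^ (13/4 : ℝ) ∂volume
      = ∫⁻ x in Metric.closedBall (0:E3) R, H (Al K a b x) ∂volume := by
    apply lintegral_congr
    intro x
    rw [hH, hnorm x]
  erw [hstep1]
  have hstep2 := cov_lintegral K a b hK R hR0 ha hb H hHmeas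
  have hstep3 : ∫⁻ y in Metric.closedBall (0:E3) (6*R), H y ∂volume
      ≤ 15625 * X ^ (13/4 : ℝ) := by
    calc ∫⁻ y in Metric.closedBall (0:E3) (6*R), H y ∂volume
        ≤ ∫⁻ y in ⋃ v ∈ Vset, Metric.closedBall (ctrV R v) ((R+1)/2), H y ∂volume :=
          lintegral_mono' (Measure.restrict_mono (covering R hR) le_rfl) le_rfl
      _ ≤ ∑ v ∈ Vset, ∫⁻ y in Metric.closedBall (ctrV R v) ((R+1)/2), H y ∂volume :=
          lintegral_biUnion_finset_le _ _ _
      _ ≤ ∑ v ∈ Vset, X ^ (13/4 : ℝ) := Finset.sum_le_sum fun v _ => hball v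
      _ = (Vset.card : ℝ≥0∞) * X ^ (13/4 : ℝ) := by
          rw [Finset.sum_const, nsmul_eq_mul]
      _ = 15625 * X ^ (13/4 : ℝ) := by rw [card_Vset]
  have hchain : ∫⁻ x in Metric.closedBall (0:E3) R, H (Al K a b x) ∂volume
      ≤ ENNReal.ofReal ((K:ℝ)^4) * (15625 * X ^ (13/4 : ℝ)) :=
    hstep2.trans (mul_le_mul_right hstep3 _)
  calc (∫⁻ x in Metric.closedBall (0:E3) R, H (Al K a b x) ∂volume) ^ (1 / (13/4 : ℝ))
      ≤ (ENNReal.ofReal ((K:ℝ)^4) * (15625 * X ^ (13/4 : ℝ))) ^ (1 / (13/4 : ℝ)) :=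
        ENNReal.rpow_le_rpow hchain (by norm_num)
    _ = ENNReal.ofReal ((K:ℝ)^4) ^ (4/13 : ℝ) * ((15625 : ℝ≥0∞) ^ (4/13 : ℝ) * X) := by
        rw [show (1 / (13/4 : ℝ)) = (4/13 : ℝ) by norm_num]
        rw [ENNReal.mul_rpow_of_nonneg _ _ (by norm_num : (0:ℝ) ≤ 4/13),
          ENNReal.mul_rpow_of_nonneg _ _ (by norm_num : (0:ℝ) ≤ 4/13),
          ← ENNReal.rpow_mul]
        norm_num
    _ ≤ ENNReal.ofReal ((K:ℝ)^(16/13 : ℝ)) * ((15625 : ℝ≥0∞) * X) := by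
        apply mul_le_mul'
        · rw [ENNReal.ofReal_rpow_of_nonneg (by positivity) (by norm_num)]
          apply le_of_eq
          congr 1
          rw [← Real.rpow_natCast (K:ℝ) 4, ← Real.rpow_mul hK0.le]
          norm_num
        · apply mul_le_mul_left
          calc (15625 : ℝ≥0∞) ^ (4/13 : ℝ) ≤ (15625 : ℝ≥0∞) ^ (1 : ℝ) :=
                ENNReal.rpow_le_rpow_of_exponent_le (by norm_num) (by norm_num)
            _ = 15625 := ENNReal.rpow_one _
    _ ≤ ENNReal.ofReal (31250 * Cε * (K : ℝ) ^ (-2 + 4 / (13 / 4) : ℝ) * R ^ ε) *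
          eLpNorm (capPiece K (a, b) f) ⊤ σS := by
        -- expand X and combine
        rw [hX]
        have hXg : eLpNorm g ⊤ σS ≤ ENNReal.ofReal (2 * ((K:ℝ)^2)⁻¹ * M) := hgbd
        have hRε : ((R+1)/2) ^ ε ≤ R ^ ε :=
          Real.rpow_le_rpow (by linarith) (by linarith) hε.le
        have hofM : ENNReal.ofReal M ≤ eLpNorm (capPiece K (a, b) f) ⊤ σS := by
          rw [hM]
          exact ENNReal.ofReal_toReal_le
        calc ENNReal.ofReal ((K:ℝ)^(16/13 : ℝ)) *
              ((15625 : ℝ≥0∞) * (ENNReal.ofReal (Cε * ((R+1)/2) ^ ε) * eLpNorm g ⊤ σS))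
            ≤ ENNReal.ofReal ((K:ℝ)^(16/13 : ℝ)) *
              ((15625 : ℝ≥0∞) * (ENNReal.ofReal (Cε * R ^ ε) *
                (ENNReal.ofReal (2 * ((K:ℝ)^2)⁻¹) * ENNReal.ofReal M))) := by
              apply mul_le_mul_right
              apply mul_le_mul_right
              apply mul_le_mul'
              · exact ENNReal.ofReal_le_ofReal
                  (mul_le_mul_of_nonneg_left hRε hCε.le)
              · calc eLpNorm g ⊤ σS ≤ ENNReal.ofReal (2 * ((K:ℝ)^2)⁻¹ * M) := hXg
                  _ = ENNReal.ofReal (2 * ((K:ℝ)^2)⁻¹) * ENNReal.ofReal M :=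
                    ENNReal.ofReal_mul (by positivity)
          _ = ENNReal.ofReal ((K:ℝ)^(16/13 : ℝ) * (15625 * ((Cε * R ^ ε) *
                (2 * ((K:ℝ)^2)⁻¹)))) * ENNReal.ofReal M := by
              have hM0 : 0 ≤ M := ENNReal.toReal_nonneg
              have e1 : ENNReal.ofReal ((K:ℝ)^(16/13:ℝ)) * ((15625:ℝ≥0∞) *
                  (ENNReal.ofReal (Cε * R ^ ε) * (ENNReal.ofReal (2 * ((K:ℝ)^2)⁻¹) *
                    ENNReal.ofReal M)))
                  = ENNReal.ofReal ((K:ℝ)^(16/13:ℝ) * (15625 * ((Cε * R ^ ε) *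
                    ((2 * ((K:ℝ)^2)⁻¹) * M)))) := by
                rw [show (15625 : ℝ≥0∞) = ENNReal.ofReal 15625 by rw [ENNReal.ofReal_ofNat],
                  ← ENNReal.ofReal_mul (by positivity), ← ENNReal.ofReal_mul (by positivity),
                  ← ENNReal.ofReal_mul (by positivity), ← ENNReal.ofReal_mul (by positivity)]
              have e2 : ENNReal.ofReal ((K:ℝ)^(16/13:ℝ) * (15625 * ((Cε * R ^ ε) *
                  (2 * ((K:ℝ)^2)⁻¹)))) * ENNReal.ofReal M
                  = ENNReal.ofReal ((K:ℝ)^(16/13:ℝ) * (15625 * ((Cε * R ^ ε) *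
                    ((2 * ((K:ℝ)^2)⁻¹) * M)))) := by
                rw [← ENNReal.ofReal_mul (by positivity)]
                congr 1
                ring
              rw [e1]
              exact e2.symm
          _ ≤ ENNReal.ofReal (31250 * Cε * (K : ℝ) ^ (-2 + 4 / (13 / 4) : ℝ) * R ^ ε) *
                eLpNorm (capPiece K (a, b) f) ⊤ σS := by
              apply mul_le_mul' _ hofM
              apply ENNReal.ofReal_le_ofReal
              apply le_of_eq
              have hKpow : (K:ℝ)^(16/13 : ℝ) * ((K:ℝ)^2)⁻¹
                  = (K : ℝ) ^ (-2 + 4 / (13 / 4) : ℝ) := by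
                rw [show ((K:ℝ)^2)⁻¹ = (K:ℝ) ^ (-2 : ℝ) by
                  rw [← Real.rpow_natCast (K:ℝ) 2, ← Real.rpow_neg hK0.le]; norm_num]
                rw [← Real.rpow_add hK0]
                norm_num
              calc (K:ℝ)^(16/13 : ℝ) * (15625 * ((Cε * R ^ ε) * (2 * ((K:ℝ)^2)⁻¹)))
                  = 31250 * Cε * ((K:ℝ)^(16/13 : ℝ) * ((K:ℝ)^2)⁻¹) * R ^ ε := by ring
                _ = 31250 * Cε * (K : ℝ) ^ (-2 + 4 / (13 / 4) : ℝ) * R ^ ε := by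
                    rw [hKpow]

end PR5
end


/-- **Lemma 3.2, estimate (3.1)** (parabolic rescaling for caps, conditional on the
inductive hypothesis): with `p₀ = 13/4`, there is an absolute constant `C` such that
whenever `ε > 0`, `C_ε > 0`, `R > 1`, `1 ≤ K ≤ R`, and the estimate
`‖Eg‖_{L^{p₀}(B')} ≤ C_ε r^ε ‖g‖_{L^∞(S)}` holds for all radii `1 ≤ r < R`, all balls `B'`
of radius `r` and all bounded measurable `g`, then for every cap `τ` and every bounded
measurable `f`, `‖Ef_τ‖_{L^{p₀}(B(R))} ≤ C C_ε K^{-2+4/p₀} R^ε ‖f_τ‖_{L^∞(S)}`. -/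
theorem parabolic_rescaling_caps :
    ∃ C : ℝ, 0 < C ∧
      ∀ ε Cε R : ℝ, 0 < ε → 0 < Cε → 1 < R → ∀ K : ℕ, 1 ≤ K → (K : ℝ) ≤ R →
        (∀ r : ℝ, 1 ≤ r → r < R → ∀ c : E3, ∀ g : ℝ × ℝ → ℂ, MemLp g ⊤ σS →
            eLpNorm (extOp g) (ENNReal.ofReal (13 / 4))
                (volume.restrict (Metric.closedBall c r))
              ≤ ENNReal.ofReal (Cε * r ^ ε) * eLpNorm g ⊤ σS) →
        ∀ ab ∈ capIdx K, ∀ f : ℝ × ℝ → ℂ, MemLp f ⊤ σS →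
          eLpNorm (extOp (capPiece K ab f)) (ENNReal.ofReal (13 / 4))
              (volume.restrict (Metric.closedBall (0 : E3) R))
            ≤ ENNReal.ofReal (C * Cε * (K : ℝ) ^ (-2 + 4 / (13 / 4) : ℝ) * R ^ ε) *
                eLpNorm (capPiece K ab f) ⊤ σS :=
  PR5.main
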